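/- Let F_q be a finite field of characteristic p, let x_0,…,x_{n−1} ∈ F_q be n distinct elements, and let r ≤ ℓ be positive integers. If the polynomials Q_0(x),…,Q_ℓ(x) ∈ F_q[x] with deg Q_ν ≤ d_ν satisfy the GSA interpolation constraints for some y ∈ F_q^n, then for every ν ∈ R_0 (the set of zero columns with resolvable spoilers of the mod-p Pascal triangle with respect to ℓ) there exists V_ν(x) ∈ F_q[x] with deg V_ν ≤ d_ν − n(r−g(ν)) such that Q_ν(x) = V_ν(x)·P_I(x)^{r−g(ν)}, where I = {0,…,n−1}. -/

import Mathlib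

open Polynomial

/-- `f` has degree at most `d`, where `d` is an integer (so `d < 0` forces `f = 0`). -/
def DegLE {F : Type*} [Field F] (f : F[X]) (d : ℤ) : Prop :=
  ∀ μ : ℕ, d < (μ : ℤ) → f.coeff μ = 0

/-- The Guruswami–Sudan interpolation constraints: for all `i` and all `s, t` with
`s + t < r`, `Σ_{ν=t}^{ℓ} C(ν,t)·y_i^{ν−t}·Σ_{μ≥s} C(μ,s)·x_i^{μ−s}·Q_{ν,μ} = 0`,
the inner sum being the `s`-th Hasse derivative of `Q ν` evaluated at `x i`. -/
def GSAConstraints {F : Type*} [Field F] {n : ℕ} (x y : Fin n → F)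
    (r ℓ : ℕ) (Q : ℕ → F[X]) : Prop :=
  ∀ i : Fin n, ∀ s t : ℕ, s + t < r →
    ∑ ν ∈ Finset.Icc t ℓ,
      (Nat.choose ν t : F) * y i ^ (ν - t) *
        ((Polynomial.hasseDeriv s (Q ν)).eval (x i)) = 0

/-- `P_S(x) = ∏_{i ∈ S} (x − x_i)`. -/
noncomputable def Ppoly {F : Type*} [Field F] {n : ℕ} (x : Fin n → F)
    (S : Finset (Fin n)) : F[X] :=
  ∏ i ∈ S, (X - C (x i))

/-- The degree bound `d_ν = r(n−ε₀) − ν(k−1) − 1` (as an integer). -/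
def degBound (r n ε₀ k ν : ℕ) : ℤ :=
  (r : ℤ) * ((n : ℤ) - (ε₀ : ℤ)) - (ν : ℤ) * ((k : ℤ) - 1) - 1

/-- `t0` is a zero column of the mod-`p` Pascal triangle with respect to `ℓ`:
`C(ν, t0) ≡ 0 (mod p)` for all `ν = t0+1, …, ℓ`. -/
def ZeroColumn (p ℓ t0 : ℕ) : Prop :=
  ∀ ν : ℕ, t0 < ν → ν ≤ ℓ → p ∣ Nat.choose ν t0

/-- `ν` is a zero column with resolvable spoilers of the mod-`p` Pascal triangle with
respect to `r` and `ℓ`: `ν < r` and every spoiler `t` of `ν` (i.e. `ν < t ≤ ℓ` with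
`C(t,ν) ≢ 0 (mod p)`) is itself a zero column with resolvable spoilers.  A zero column
(with `t0 < r`) has no spoilers and is the base case of the recursion; if no zero column
exists, no column satisfies this predicate. -/
def ZCRS (p r ℓ : ℕ) (ν : ℕ) : Prop :=
  ν < r ∧ ∀ t, ν < t → t ≤ ℓ → ¬ (p ∣ Nat.choose t ν) → ZCRS p r ℓ t
termination_by ℓ - ν
decreasing_by omega

/-- The set `S_ν` of spoilers of column `ν`: those `t` with `ν < t ≤ ℓ` and
`C(t,ν) ≢ 0 (mod p)`. -/
def spoilerSet (p ℓ ν : ℕ) : Finset ℕ :=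
  (Finset.Icc (ν + 1) ℓ).filter fun t => ¬ (p ∣ Nat.choose t ν)

/-- `g(ν) = max S_ν` if `S_ν ≠ ∅`, and `g(ν) = ν` otherwise. -/
def gval (p ℓ ν : ℕ) : ℕ :=
  if h : (spoilerSet p ℓ ν).Nonempty then (spoilerSet p ℓ ν).max' h else ν


section Aux

open Polynomial

lemma taylor_pow' {F : Type*} [Field F] (b : F) (g : F[X]) (m : ℕ) :
    taylor b (g ^ m) = (taylor b g) ^ m := by
  induction m with
  | zero => simpa using (taylor_one b)
  | succ k ih => rw [pow_succ, taylor_mul, ih, pow_succ]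

lemma pow_X_sub_C_dvd_iff {F : Type*} [Field F] (a : F) (m : ℕ) (f : F[X]) :
    (X - C a) ^ m ∣ f ↔ ∀ s, s < m → (Polynomial.hasseDeriv s f).eval a = 0 := by
  have htx : taylor a (X - C a) = X := by
    simp [taylor_apply, sub_comp]
  constructor
  · rintro ⟨g, rfl⟩ s hs
    rw [← taylor_coeff, taylor_mul, taylor_pow', htx]
    exact X_pow_dvd_iff.mp ⟨taylor a g, rfl⟩ s hs
  · intro hs
    obtain ⟨g, hg⟩ : X ^ m ∣ taylor a f :=
      X_pow_dvd_iff.mpr fun d hd => by rw [taylor_coeff]; exact hs d hd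
    refine ⟨taylor (-a) g, ?_⟩
    have h2 := congrArg (taylor (-a)) hg
    rw [taylor_taylor, neg_add_cancel, taylor_zero, taylor_mul, taylor_pow'] at h2
    rw [h2]
    congr 2
    simp [taylor_apply, sub_eq_add_neg]

lemma spoiler_trans {p : ℕ} (hp : p.Prime) {ν t u : ℕ} (hνt : ν ≤ t) (htu : t ≤ u)
    (h1 : ¬ p ∣ Nat.choose u t) (h2 : ¬ p ∣ Nat.choose t ν) : ¬ p ∣ Nat.choose u ν := by
  intro hd
  have key := Nat.choose_mul (n := u) hνt
  have : p ∣ Nat.choose u t * Nat.choose t ν := by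
    rw [key]; exact Dvd.dvd.mul_right hd _
  rcases (Nat.Prime.dvd_mul hp).mp this with h | h
  · exact h1 h
  · exact h2 h

lemma mem_spoilerSet {p ℓ ν t : ℕ} :
    t ∈ spoilerSet p ℓ ν ↔ ν < t ∧ t ≤ ℓ ∧ ¬ p ∣ Nat.choose t ν := by
  simp only [spoilerSet, Finset.mem_filter, Finset.mem_Icc, and_assoc, Nat.add_one_le_iff]

lemma le_gval (p ℓ ν : ℕ) : ν ≤ gval p ℓ ν := by
  unfold gval
  split
  · next h =>
    have := mem_spoilerSet.mp ((spoilerSet p ℓ ν).max'_mem h)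
    omega
  · exact le_refl ν

lemma mem_spoiler_gval_le {p : ℕ} (hp : p.Prime) {ℓ ν t : ℕ}
    (ht : t ∈ spoilerSet p ℓ ν) : gval p ℓ t ≤ gval p ℓ ν := by
  have hN : (spoilerSet p ℓ ν).Nonempty := ⟨t, ht⟩
  rw [mem_spoilerSet] at ht
  have hgν : gval p ℓ ν = (spoilerSet p ℓ ν).max' hN := by unfold gval; rw [dif_pos hN]
  rw [hgν]
  unfold gval
  split
  · next h =>
    have hm := mem_spoilerSet.mp ((spoilerSet p ℓ t).max'_mem h)
    apply Finset.le_max'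
    rw [mem_spoilerSet]
    exact ⟨by omega, hm.2.1, spoiler_trans hp (by omega) (by omega) hm.2.2 ht.2.2⟩
  · exact Finset.le_max' _ _ (mem_spoilerSet.mpr ht)

lemma ZCRS_lt {p r ℓ ν : ℕ} (h : ZCRS p r ℓ ν) : ν < r := by
  rw [ZCRS] at h; exact h.1

lemma ZCRS_spoiler {p r ℓ ν : ℕ} (h : ZCRS p r ℓ ν) :
    ∀ t, ν < t → t ≤ ℓ → ¬ (p ∣ Nat.choose t ν) → ZCRS p r ℓ t := by
  rw [ZCRS] at h; exact h.2

lemma gval_lt_r {p r ℓ ν : ℕ} (hZ : ZCRS p r ℓ ν) : gval p ℓ ν < r := by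
  unfold gval
  split
  · next h =>
    have hm := mem_spoilerSet.mp ((spoilerSet p ℓ ν).max'_mem h)
    exact ZCRS_lt (ZCRS_spoiler hZ _ hm.1 hm.2.1 hm.2.2)
  · exact ZCRS_lt hZ

theorem main_dvd {F : Type*} [Field F] {p : ℕ} (hp : p.Prime) [CharP F p] {n : ℕ}
    (x : Fin n → F) (hx : Function.Injective x)
    (r ℓ : ℕ) (hrℓ : r ≤ ℓ) (y : Fin n → F) (Q : ℕ → F[X])
    (hGSA : GSAConstraints x y r ℓ Q)
    (ν : ℕ) (hZ : ZCRS p r ℓ ν) :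
    (Ppoly x Finset.univ) ^ (r - gval p ℓ ν) ∣ Q ν := by
  have hgr : gval p ℓ ν < r := gval_lt_r hZ
  have hνg : ν ≤ gval p ℓ ν := le_gval p ℓ ν
  have hi : ∀ i : Fin n, (X - C (x i)) ^ (r - gval p ℓ ν) ∣ Q ν := by
    intro i
    rw [pow_X_sub_C_dvd_iff]
    intro s hs
    have hsum := hGSA i s ν (by omega)
    have hterm : ∀ t ∈ Finset.Icc ν ℓ, t ≠ ν →
        (Nat.choose t ν : F) * y i ^ (t - ν) * (Polynomial.hasseDeriv s (Q t)).eval (x i) = 0 := by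
      intro t htmem htne
      rw [Finset.mem_Icc] at htmem
      by_cases hd : p ∣ Nat.choose t ν
      · rw [(CharP.cast_eq_zero_iff F p _).mpr hd]; ring
      · have hts : t ∈ spoilerSet p ℓ ν := mem_spoilerSet.mpr ⟨by omega, htmem.2, hd⟩
        have hlt : ν < t := by omega
        have hZt : ZCRS p r ℓ t := ZCRS_spoiler hZ t hlt htmem.2 hd
        have hdvd := main_dvd hp x hx r ℓ hrℓ y Q hGSA t hZt
        have hgt : gval p ℓ t ≤ gval p ℓ ν := mem_spoiler_gval_le hp hts
        have hXdvd : (X - C (x i)) ^ (r - gval p ℓ t) ∣ Q t := by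
          refine dvd_trans (pow_dvd_pow_of_dvd ?_ _) hdvd
          exact Finset.dvd_prod_of_mem _ (Finset.mem_univ i)
        have hz := (pow_X_sub_C_dvd_iff (x i) (r - gval p ℓ t) (Q t)).mp hXdvd s (by omega)
        rw [hz]; ring
    rw [Finset.sum_eq_single_of_mem ν (Finset.mem_Icc.mpr ⟨le_refl ν, by omega⟩) hterm] at hsum
    simpa using hsum
  have hprod : ∏ i : Fin n, (X - C (x i)) ^ (r - gval p ℓ ν) ∣ Q ν := by
    apply Finset.prod_dvd_of_coprime
    · intro a _ b _ hab
      exact (Polynomial.pairwise_coprime_X_sub_C hx hab).pow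
    · intro i _
      exact hi i
  rwa [Finset.prod_pow] at hprod
termination_by ℓ - ν
decreasing_by omega

end Aux

/-- Sierpinski prefactors: if the `Q ν` satisfy the GSA interpolation
constraints with degree bounds `d_ν`, then for every zero column with resolvable
spoilers `ν`, `Q ν = V · P_I ^ (r − g(ν))` with `deg V ≤ d_ν − n(r − g(ν))`. -/
theorem sierpinski_prefactors {F : Type*} [Field F] [Fintype F]
    {p : ℕ} (hp : p.Prime) [CharP F p] {n : ℕ}
    (x : Fin n → F) (hx : Function.Injective x)
    (r ℓ k ε₀ : ℕ) (hr : 0 < r) (hrℓ : r ≤ ℓ)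
    (y : Fin n → F) (Q : ℕ → F[X])
    (hdeg : ∀ ν ≤ ℓ, DegLE (Q ν) (degBound r n ε₀ k ν))
    (hGSA : GSAConstraints x y r ℓ Q) :
    ∀ ν, ZCRS p r ℓ ν → ∃ V : F[X],
      DegLE V (degBound r n ε₀ k ν - (n : ℤ) * ((r : ℤ) - (gval p ℓ ν : ℤ))) ∧
      Q ν = V * (Ppoly x Finset.univ) ^ (r - gval p ℓ ν) := by
  intro ν hZ
  have hνr : ν < r := ZCRS_lt hZ
  have hgr : gval p ℓ ν < r := gval_lt_r hZ
  obtain ⟨V, hV⟩ := main_dvd hp x hx r ℓ hrℓ y Q hGSA ν hZ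
  refine ⟨V, ?_, by rw [hV]; ring⟩
  have hPmonic : (Ppoly x Finset.univ).Monic := by
    rw [Ppoly]; exact monic_prod_of_monic _ _ fun i _ => monic_X_sub_C _
  have hPdeg : (Ppoly x Finset.univ).natDegree = n := by
    rw [Ppoly, natDegree_prod_of_monic _ _ fun i _ => monic_X_sub_C _]
    simp
  intro μ hμ
  by_contra hc
  have hVne : V ≠ 0 := fun h => hc (by simp [h])
  have hμle : μ ≤ V.natDegree := le_natDegree_of_ne_zero hc
  have hPmne : (Ppoly x Finset.univ) ^ (r - gval p ℓ ν) ≠ 0 :=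
    (hPmonic.pow _).ne_zero
  have hQne : Q ν ≠ 0 := by rw [hV]; exact mul_ne_zero hPmne hVne
  have hQdeg : (Q ν).natDegree = n * (r - gval p ℓ ν) + V.natDegree := by
    rw [hV, natDegree_mul hPmne hVne, natDegree_pow, hPdeg]; ring
  have hcast : ((n * (r - gval p ℓ ν) : ℕ) : ℤ)
      = (n : ℤ) * ((r : ℤ) - (gval p ℓ ν : ℤ)) := by
    push_cast [Nat.cast_sub hgr.le]
    ring
  have hlt : degBound r n ε₀ k ν < ((Q ν).natDegree : ℤ) := by
    rw [hQdeg]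
    push_cast [hcast]
    omega
  have hzero := hdeg ν (by omega) (Q ν).natDegree hlt
  exact hQne (Polynomial.leadingCoeff_eq_zero.mp hzero)
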